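/- Let $a\in(-1,1)$, $\nu=(a-1)/2$, and for $x,y\in\mathbb{R}$, $t>0$ define $\widetilde u(x,y,t)=(4t)^{-(a+1)/2}e^{-(x-y)^2/(4t)}\Big(e^{-xy/(2t)}\sum_{k\ge0}\frac{(xy/(4t))^{2k}}{k!\,\Gamma(k+\nu+1)}+\frac{xy}{4t}\big|\frac{xy}{4t}\big|^{-a}e^{-xy/(2t)}\sum_{k\ge0}\frac{(xy/(4t))^{2k}}{k!\,\Gamma(k-\nu+1)}\Big)$. Then for every $x\in\mathbb{R}$, every $y\neq 0$, and every $t>0$, $\widetilde u$ satisfies $\partial_t \widetilde u - \partial_{yy}\widetilde u - \frac{a}{y}\partial_y \widetilde u = 0$. -/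

import Mathlib

noncomputable section
open Real

/-- The Bessel-type profile `F(z)` with `ν = (a-1)/2`:
`F(z) = e^{-z/2} ( ∑_k (z/4)^{2k}/(k! Γ(k+ν+1)) + (z/4)|z/4|^{-a} ∑_k (z/4)^{2k}/(k! Γ(k-ν+1)) )`. -/
def Fker (a z : ℝ) : ℝ :=
  Real.exp (-z / 2) *
    ((∑' k : ℕ, (z / 4) ^ (2 * k) / ((Nat.factorial k : ℝ) * Real.Gamma ((k : ℝ) + (a - 1) / 2 + 1))) +
      z / 4 * |z / 4| ^ (-a) *
        ∑' k : ℕ, (z / 4) ^ (2 * k) / ((Nat.factorial k : ℝ) * Real.Gamma ((k : ℝ) - (a - 1) / 2 + 1)))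

/-- The one-dimensional degenerate heat kernel
`ũ(x,y,t) = (4t)^{-(a+1)/2} e^{-(x-y)²/(4t)} F(xy/t)`. -/
def utilde (a x y t : ℝ) : ℝ :=
  (4 * t) ^ (-(a + 1) / 2) * Real.exp (-(x - y) ^ 2 / (4 * t)) * Fker a (x * y / t)


namespace UP
open Filter Metric Set

def dcoef (μ : ℝ) (k : ℕ) : ℝ := 1 / (k.factorial * Real.Gamma ((k:ℝ) + μ + 1))

lemma arg_pos {μ : ℝ} (hμ : -1 < μ) (k : ℕ) : 0 < (k:ℝ) + μ + 1 := by
  have : (0:ℝ) ≤ k := Nat.cast_nonneg k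
  linarith

lemma dcoef_pos {μ : ℝ} (hμ : -1 < μ) (k : ℕ) : 0 < dcoef μ k := by
  have h1 : 0 < Real.Gamma ((k:ℝ) + μ + 1) := Real.Gamma_pos_of_pos (arg_pos hμ k)
  have h2 : (0:ℝ) < k.factorial := by exact_mod_cast k.factorial_pos
  exact div_pos one_pos (by positivity)

lemma dcoef_rec {μ : ℝ} (hμ : -1 < μ) (k : ℕ) :
    ((k:ℝ)+1) * ((k:ℝ)+μ+1) * dcoef μ (k+1) = dcoef μ k := by
  have hpos := arg_pos hμ k
  have hΓ : Real.Gamma (((k+1:ℕ):ℝ) + μ + 1) = ((k:ℝ)+μ+1) * Real.Gamma ((k:ℝ)+μ+1) := by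
    push_cast
    rw [show (k:ℝ) + 1 + μ + 1 = ((k:ℝ) + μ + 1) + 1 by ring, Real.Gamma_add_one hpos.ne']
  have hΓpos : 0 < Real.Gamma ((k:ℝ) + μ + 1) := Real.Gamma_pos_of_pos hpos
  have hfac : ((k+1).factorial : ℝ) = ((k:ℝ)+1) * k.factorial := by
    rw [Nat.factorial_succ]; push_cast; ring
  have h2 : (0:ℝ) < k.factorial := by exact_mod_cast k.factorial_pos
  unfold dcoef
  rw [hΓ, hfac]
  field_simp


lemma summable_master {μ : ℝ} (hμ : -1 < μ) (p : ℕ) (R : ℝ) :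
    Summable fun k : ℕ => dcoef μ k * (2*(k:ℝ)+2)^p * R^(2*k+2) := by
  apply summable_of_ratio_norm_eventually_le (r := 1/2) (by norm_num)
  filter_upwards [eventually_ge_atTop (⌈(2:ℝ)^(p+1) * R^2⌉₊ + 1)] with k hk
  have hk1 : ((⌈(2:ℝ)^(p+1) * R^2⌉₊ : ℝ)) ≤ (k:ℝ) - 1 := by
    have : (⌈(2:ℝ)^(p+1) * R^2⌉₊ + 1 : ℕ) ≤ k := hk
    have := (Nat.cast_le (α := ℝ)).mpr this
    push_cast at this; linarith
  have hkR : (2:ℝ)^(p+1) * R^2 ≤ (k:ℝ) := by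
    have := Nat.le_ceil ((2:ℝ)^(p+1) * R^2)
    linarith
  have hdpos := dcoef_pos hμ
  have hRsq : (0:ℝ) ≤ R^(2*k+2) := by
    have : R^(2*k+2) = (R^(k+1))^2 := by rw [← pow_mul]; ring_nf
    rw [this]; positivity
  have hRsq' : (0:ℝ) ≤ R^(2*(k+1)+2) := by
    have : R^(2*(k+1)+2) = (R^(k+2))^2 := by rw [← pow_mul]; ring_nf
    rw [this]; positivity
  have hterm : (0:ℝ) ≤ dcoef μ k * (2*(k:ℝ)+2)^p * R^(2*k+2) := by
    have := (hdpos k).le; positivity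
  have hterm' : (0:ℝ) ≤ dcoef μ (k+1) * (2*((k:ℝ)+1)+2)^p * R^(2*(k+1)+2) := by
    have := (hdpos (k+1)).le; positivity
  rw [Real.norm_of_nonneg hterm, Real.norm_of_nonneg (by push_cast at hterm' ⊢; convert hterm' using 2)]
  have hk0 : (1:ℝ) ≤ (k:ℝ) := by
    have : 1 ≤ k := le_trans (Nat.le_add_left 1 _) hk
    exact_mod_cast this
  have hMpos : (0:ℝ) < ((k:ℝ)+1)*((k:ℝ)+μ+1) := by nlinarith
  have e1 : dcoef μ (k+1) = dcoef μ k / (((k:ℝ)+1)*((k:ℝ)+μ+1)) := by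
    rw [← dcoef_rec hμ k, eq_div_iff hMpos.ne']; ring
  have e2 : R^(2*(k+1)+2) = R^(2*k+2) * R^2 := by rw [← pow_add]; ring_nf
  have e3 : (2*((k:ℝ)+1)+2)^p ≤ 2^p * (2*(k:ℝ)+2)^p := by
    rw [← mul_pow]; apply pow_le_pow_left₀ (by linarith) (by linarith)
  have hM : (2:ℝ)^p * R^2 ≤ (((k:ℝ)+1)*((k:ℝ)+μ+1))/2 := by
    have h2p : (2:ℝ)^(p+1) = 2 * 2^p := by rw [pow_succ]; ring
    rw [h2p] at hkR
    nlinarith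
  have hDPS : (0:ℝ) ≤ dcoef μ k * (2*(k:ℝ)+2)^p * R^(2*k+2) := hterm
  push_cast
  calc dcoef μ (k+1) * (2*((k:ℝ)+1)+2)^p * R^(2*(k+1)+2)
      = (dcoef μ k * ((2*((k:ℝ)+1)+2)^p * (R^(2*k+2)*R^2))) / (((k:ℝ)+1)*((k:ℝ)+μ+1)) := by
        rw [e1, e2]; ring
    _ ≤ (dcoef μ k * ((2^p*(2*(k:ℝ)+2)^p) * (R^(2*k+2)*R^2))) / (((k:ℝ)+1)*((k:ℝ)+μ+1)) := by
        gcongr dcoef μ k * (?_ * (R^(2*k+2)*R^2)) / (((k:ℝ)+1)*((k:ℝ)+μ+1)) <;>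
          first
          | exact (dcoef_pos hμ k).le
          | exact e3
          | (have : R^(2*k+2)*R^2 = (R^(k+2))^2 := by rw [← pow_add, ← pow_mul]; ring_nf
             rw [this]; positivity)
    _ ≤ 1/2 * (dcoef μ k * (2*(k:ℝ)+2)^p * R^(2*k+2)) := by
        rw [div_le_iff₀ hMpos]
        have h1 : dcoef μ k * ((2^p*(2*(k:ℝ)+2)^p) * (R^(2*k+2)*R^2))
            = (dcoef μ k * (2*(k:ℝ)+2)^p * R^(2*k+2)) * (2^p * R^2) := by ring
        have h2 : 1/2 * (dcoef μ k * (2*(k:ℝ)+2)^p * R^(2*k+2)) * (((k:ℝ)+1)*((k:ℝ)+μ+1))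
            = (dcoef μ k * (2*(k:ℝ)+2)^p * R^(2*k+2)) * ((((k:ℝ)+1)*((k:ℝ)+μ+1))/2) := by ring
        rw [h1, h2]
        exact mul_le_mul_of_nonneg_left hM hDPS


lemma hasDerivAt_tsum_pow (e : ℕ → ℝ) (m : ℕ → ℕ) (hm : ∀ k, m k ≤ 2*k+2)
    (hs : ∀ R : ℝ, 1 ≤ R → Summable fun k : ℕ => |e k| * (2*(k:ℝ)+2) * R^(2*k+2)) (w : ℝ) :
    HasDerivAt (fun y : ℝ => ∑' k : ℕ, e k * y ^ (m k))
      (∑' k : ℕ, e k * (m k : ℝ) * w ^ (m k - 1)) w := by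
  set R : ℝ := |w| + 1 with hR
  have hR1 : 1 ≤ R := by have := abs_nonneg w; simp [hR]
  have hR0 : 0 < R := by linarith
  have hball : w ∈ ball (0:ℝ) R := by
    simp [Real.dist_eq, hR]
  have h0ball : (0:ℝ) ∈ ball (0:ℝ) R := by simp [hR0]
  have key := hasDerivAt_tsum_of_isPreconnected (hs R hR1) isOpen_ball
    (convex_ball (0:ℝ) R).isPreconnected
    (g := fun k y => e k * y ^ (m k)) (g' := fun k y => e k * ((m k : ℝ) * y ^ (m k - 1)))
    (fun k y _ => (hasDerivAt_pow (m k) y).const_mul (e k))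
    ?_ h0ball ?_ hball
  · refine key.congr_deriv ?_
    exact tsum_congr fun k => by ring
  · intro k y hyb
    have hy : |y| ≤ R := by
      have := mem_ball_iff_norm.mp hyb
      simp only [sub_zero, Real.norm_eq_abs] at this
      linarith
    have h1 : ‖e k * ((m k : ℝ) * y ^ (m k - 1))‖ = |e k| * ((m k:ℝ) * |y ^ (m k -1)|) := by
      rw [norm_mul, norm_mul]
      simp [abs_of_nonneg (by positivity : (0:ℝ) ≤ (m k:ℝ))]
    rw [h1]
    have h2 : |y ^ (m k - 1)| ≤ R ^ (2*k+2) := by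
      rw [abs_pow]
      calc |y| ^ (m k - 1) ≤ R ^ (m k - 1) := pow_le_pow_left₀ (abs_nonneg y) hy _
        _ ≤ R ^ (2*k+2) := pow_le_pow_right₀ hR1 (by have := hm k; omega)
    have h3 : (m k : ℝ) ≤ 2*(k:ℝ)+2 := by exact_mod_cast hm k
    calc |e k| * ((m k:ℝ) * |y ^ (m k -1)|)
        ≤ |e k| * ((2*(k:ℝ)+2) * R^(2*k+2)) := by
          apply mul_le_mul_of_nonneg_left _ (abs_nonneg _)
          exact mul_le_mul h3 h2 (abs_nonneg _) (by positivity)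
      _ = |e k| * (2*(k:ℝ)+2) * R^(2*k+2) := by ring
  · apply Summable.of_norm_bounded (hs R hR1)
    intro k
    rw [norm_mul]
    have : ‖(0:ℝ) ^ (m k)‖ ≤ 1 := by
      rcases Nat.eq_zero_or_pos (m k) with h | h
      · simp [h]
      · rw [Real.norm_eq_abs, zero_pow h.ne']; simp
    calc ‖e k‖ * ‖(0:ℝ) ^ (m k)‖ ≤ |e k| * 1 := by
          apply mul_le_mul_of_nonneg_left this (abs_nonneg _)
      _ ≤ |e k| * ((2*(k:ℝ)+2) * R^(2*k+2)) := by
          apply mul_le_mul_of_nonneg_left _ (abs_nonneg _)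
          have h1 : (1:ℝ) ≤ R^(2*k+2) := one_le_pow₀ hR1
          nlinarith [h1]
      _ = |e k| * (2*(k:ℝ)+2) * R^(2*k+2) := by ring


def Gf (μ w : ℝ) : ℝ := ∑' k : ℕ, dcoef μ k * w ^ (2*k)
def DG (μ w : ℝ) : ℝ := ∑' k : ℕ, dcoef μ k * ((2*k : ℕ) : ℝ) * w ^ (2*k - 1)
def DDG (μ w : ℝ) : ℝ := ∑' k : ℕ, dcoef μ k * ((2*k : ℕ) : ℝ) * ((2*k - 1 : ℕ) : ℝ) * w ^ (2*k - 1 - 1)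

lemma hasDerivAt_Gf {μ : ℝ} (hμ : -1 < μ) (w : ℝ) : HasDerivAt (Gf μ) (DG μ w) w := by
  have h := hasDerivAt_tsum_pow (fun k => dcoef μ k) (fun k => 2*k) (fun k => by show 2*k ≤ 2*k+2; omega)
    (fun R _ => by
      apply Summable.of_nonneg_of_le (fun k => by positivity)
        (fun k => ?_) (summable_master hμ 1 R)
      rw [abs_of_nonneg (dcoef_pos hμ k).le, pow_one]) w
  exact h

lemma hasDerivAt_DG {μ : ℝ} (hμ : -1 < μ) (w : ℝ) : HasDerivAt (DG μ) (DDG μ w) w := by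
  have h := hasDerivAt_tsum_pow (fun k => dcoef μ k * ((2*k : ℕ) : ℝ)) (fun k => 2*k - 1)
    (fun k => by show 2*k-1 ≤ 2*k+2; omega)
    (fun R hR => by
      apply Summable.of_nonneg_of_le (fun k => by positivity)
        (fun k => ?_) (summable_master hμ 2 R)
      have hd := (dcoef_pos hμ k).le
      have hcast : (0:ℝ) ≤ ((2*k : ℕ) : ℝ) := by positivity
      rw [abs_of_nonneg (mul_nonneg hd hcast)]
      have hR2 : (0:ℝ) ≤ R^(2*k+2) := by
        have : R^(2*k+2) = (R^(k+1))^2 := by rw [← pow_mul]; ring_nf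
        rw [this]; positivity
      have hfac : dcoef μ k * ((2*k : ℕ) : ℝ) * (2*(k:ℝ)+2) ≤ dcoef μ k * (2*(k:ℝ)+2)^2 := by
        push_cast
        nlinarith [hd, Nat.cast_nonneg (α := ℝ) k]
      calc dcoef μ k * ((2*k : ℕ) : ℝ) * (2*(k:ℝ)+2) * R^(2*k+2)
          ≤ dcoef μ k * (2*(k:ℝ)+2)^2 * R^(2*k+2) := mul_le_mul_of_nonneg_right hfac hR2) w
  exact h

lemma abs_pow_le {w : ℝ} {n k : ℕ} (hn : n ≤ 2*k+2) : |w|^n ≤ (|w|+1)^(2*k+2) :=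
  le_trans (pow_le_pow_left₀ (abs_nonneg w) (by linarith [abs_nonneg w]) n)
    (pow_le_pow_right₀ (by linarith [abs_nonneg w]) hn)

lemma summable_SG {μ : ℝ} (hμ : -1 < μ) (w : ℝ) :
    Summable fun k : ℕ => dcoef μ k * w ^ (2*k) := by
  apply Summable.of_norm_bounded (summable_master hμ 2 (|w|+1))
  intro k
  rw [Real.norm_eq_abs, abs_mul, abs_of_nonneg (dcoef_pos hμ k).le, abs_pow]
  have h1 : |w|^(2*k) ≤ (|w|+1)^(2*k+2) := abs_pow_le (by omega)
  have h2 : (1:ℝ) ≤ (2*(k:ℝ)+2)^2 := by nlinarith [Nat.cast_nonneg (α := ℝ) k]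
  have hd := (dcoef_pos hμ k).le
  have hR : (0:ℝ) ≤ (|w|+1)^(2*k+2) := by positivity
  nlinarith [mul_le_mul_of_nonneg_left h1 hd, mul_nonneg hd hR]

lemma summable_SDG {μ : ℝ} (hμ : -1 < μ) (w : ℝ) :
    Summable fun k : ℕ => dcoef μ k * ((2*k : ℕ) : ℝ) * w ^ (2*k - 1) := by
  apply Summable.of_norm_bounded (summable_master hμ 2 (|w|+1))
  intro k
  rw [Real.norm_eq_abs, abs_mul, abs_mul, abs_of_nonneg (dcoef_pos hμ k).le, abs_pow,
    abs_of_nonneg (by positivity : (0:ℝ) ≤ ((2*k:ℕ):ℝ))]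
  have h1 : |w|^(2*k-1) ≤ (|w|+1)^(2*k+2) := abs_pow_le (by omega)
  have h2 : ((2*k:ℕ):ℝ) ≤ (2*(k:ℝ)+2)^2 := by
    push_cast; nlinarith [Nat.cast_nonneg (α := ℝ) k]
  have hd := (dcoef_pos hμ k).le
  have hwp : (0:ℝ) ≤ |w|^(2*k-1) := by positivity
  have hc : (0:ℝ) ≤ ((2*k:ℕ):ℝ) := by positivity
  calc dcoef μ k * ((2*k:ℕ):ℝ) * |w|^(2*k-1)
      ≤ dcoef μ k * (2*(k:ℝ)+2)^2 * (|w|+1)^(2*k+2) := by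
        apply mul_le_mul (mul_le_mul_of_nonneg_left h2 hd) h1 hwp (by positivity)

lemma summable_SDDG {μ : ℝ} (hμ : -1 < μ) (w : ℝ) :
    Summable fun k : ℕ => dcoef μ k * ((2*k : ℕ) : ℝ) * ((2*k - 1 : ℕ) : ℝ) * w ^ (2*k - 1 - 1) := by
  apply Summable.of_norm_bounded (summable_master hμ 2 (|w|+1))
  intro k
  rw [Real.norm_eq_abs, abs_mul, abs_mul, abs_mul, abs_of_nonneg (dcoef_pos hμ k).le, abs_pow,
    abs_of_nonneg (by positivity : (0:ℝ) ≤ ((2*k:ℕ):ℝ)),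
    abs_of_nonneg (by positivity : (0:ℝ) ≤ ((2*k-1:ℕ):ℝ))]
  have h1 : |w|^(2*k-1-1) ≤ (|w|+1)^(2*k+2) := abs_pow_le (by omega)
  have h2 : ((2*k:ℕ):ℝ) * ((2*k-1:ℕ):ℝ) ≤ (2*(k:ℝ)+2)^2 := by
    have a1 : ((2*k:ℕ):ℝ) ≤ 2*(k:ℝ)+2 := by push_cast; linarith
    have a2 : ((2*k-1:ℕ):ℝ) ≤ 2*(k:ℝ)+2 := by
      have : ((2*k-1:ℕ):ℝ) ≤ ((2*k:ℕ):ℝ) := by exact_mod_cast Nat.sub_le _ _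
      push_cast at this ⊢; linarith
    have b1 : (0:ℝ) ≤ ((2*k:ℕ):ℝ) := by positivity
    have b2 : (0:ℝ) ≤ ((2*k-1:ℕ):ℝ) := by positivity
    calc ((2*k:ℕ):ℝ) * ((2*k-1:ℕ):ℝ) ≤ (2*(k:ℝ)+2) * (2*(k:ℝ)+2) :=
          mul_le_mul a1 a2 b2 (by positivity)
      _ = (2*(k:ℝ)+2)^2 := by ring
  have hd := (dcoef_pos hμ k).le
  have hwp : (0:ℝ) ≤ |w|^(2*k-1-1) := by positivity
  calc dcoef μ k * ((2*k:ℕ):ℝ) * ((2*k-1:ℕ):ℝ) * |w|^(2*k-1-1)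
      ≤ dcoef μ k * (2*(k:ℝ)+2)^2 * (|w|+1)^(2*k+2) := by
        have : dcoef μ k * ((2*k:ℕ):ℝ) * ((2*k-1:ℕ):ℝ) = dcoef μ k * (((2*k:ℕ):ℝ) * ((2*k-1:ℕ):ℝ)) := by ring
        rw [this]
        apply mul_le_mul (mul_le_mul_of_nonneg_left h2 hd) h1 hwp (by positivity)

lemma ode {μ : ℝ} (hμ : -1 < μ) (w : ℝ) :
    w * DDG μ w + (2*μ+1) * DG μ w - 4*w*Gf μ w = 0 := by
  rw [Gf, DG, DDG, ← tsum_mul_left, ← tsum_mul_left, ← tsum_mul_left]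
  have hA : Summable fun k : ℕ => w * (dcoef μ k * ((2*k : ℕ) : ℝ) * ((2*k - 1 : ℕ) : ℝ) * w ^ (2*k - 1 - 1)) :=
    (summable_SDDG hμ w).mul_left w
  have hB : Summable fun k : ℕ => (2*μ+1) * (dcoef μ k * ((2*k : ℕ) : ℝ) * w ^ (2*k - 1)) :=
    (summable_SDG hμ w).mul_left (2*μ+1)
  have hC : Summable fun k : ℕ => (4*w) * (dcoef μ k * w ^ (2*k)) :=
    (summable_SG hμ w).mul_left (4*w)
  rw [← hA.tsum_add hB, sub_eq_zero]
  have h40 : ∀ k : ℕ, (4*w) * (dcoef μ k * w ^ (2*k)) = 4*w*(dcoef μ k * w ^ (2*k)) := fun k => by ring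
  rw [(hA.add hB).tsum_eq_zero_add]
  have h0 : w * (dcoef μ 0 * ((2*0 : ℕ) : ℝ) * ((2*0 - 1 : ℕ) : ℝ) * w ^ (2*0 - 1 - 1))
      + (2*μ+1) * (dcoef μ 0 * ((2*0 : ℕ) : ℝ) * w ^ (2*0 - 1)) = 0 := by norm_num
  rw [h0, zero_add]
  apply tsum_congr
  intro k
  have e1 : 2*(k+1)-1-1 = 2*k := by omega
  have e2 : 2*(k+1)-1 = 2*k+1 := by omega
  rw [e1, e2]
  have c1 : ((2*(k+1):ℕ):ℝ) = 2*(k:ℝ)+2 := by push_cast; ring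
  have c2 : ((2*k+1:ℕ):ℝ) = 2*(k:ℝ)+1 := by push_cast; ring
  rw [c1, c2]
  have hrec := dcoef_rec hμ k
  have hp : w^(2*k+1) = w^(2*k) * w := pow_succ w (2*k)
  rw [hp]
  linear_combination (4*w*w^(2*k)) * hrec


lemma hasDerivAt_abs_rpow (a : ℝ) {w : ℝ} (hw : w ≠ 0) :
    HasDerivAt (fun w : ℝ => |w| ^ (-a)) (-a * |w| ^ (-a) / w) w := by
  rcases hw.lt_or_gt with h | h
  · -- w < 0
    have hev : (fun w : ℝ => (-w) ^ (-a)) =ᶠ[nhds w] (fun w : ℝ => |w| ^ (-a)) := by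
      filter_upwards [IsOpen.mem_nhds isOpen_Iio h] with z hz
      rw [abs_of_neg hz]
    have h1 : HasDerivAt (fun w : ℝ => (-w) ^ (-a)) ((-1) * (-a) * (-w) ^ (-a-1)) w := by
      have hneg : HasDerivAt (fun w : ℝ => -w) (-1) w := (hasDerivAt_id w).neg
      exact HasDerivAt.rpow_const hneg (Or.inl (by simp; linarith))
    have := h1.congr_of_eventuallyEq hev.symm
    refine this.congr_deriv ?_
    rw [abs_of_neg h]
    rw [show (-w) ^ (-a-1) = (-w)^(-a) / (-w) by
      rw [eq_div_iff (by linarith : -w ≠ 0), ← Real.rpow_add_one (by linarith : -w ≠ 0) (-a-1)]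
      ring_nf]
    field_simp [hw]
  · -- 0 < w
    have hev : (fun w : ℝ => w ^ (-a)) =ᶠ[nhds w] (fun w : ℝ => |w| ^ (-a)) := by
      filter_upwards [IsOpen.mem_nhds isOpen_Ioi h] with z hz
      rw [abs_of_pos hz]
    have h1 : HasDerivAt (fun w : ℝ => w ^ (-a)) (-a * w ^ (-a-1)) w := by
      have := Real.hasDerivAt_rpow_const (x := w) (p := -a) (Or.inl h.ne')
      convert this using 1
    have := h1.congr_of_eventuallyEq hev.symm
    refine this.congr_deriv ?_
    rw [abs_of_pos h]
    rw [show w ^ (-a-1) = w^(-a) / w by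
      rw [eq_div_iff h.ne', ← Real.rpow_add_one h.ne' (-a-1)]
      ring_nf]
    ring

def sfun (a w : ℝ) : ℝ := w * |w| ^ (-a)

lemma hasDerivAt_sfun (a : ℝ) {w : ℝ} (hw : w ≠ 0) :
    HasDerivAt (sfun a) ((1-a) * |w| ^ (-a)) w := by
  have h := (hasDerivAt_id w).mul (hasDerivAt_abs_rpow a hw)
  refine h.congr_deriv ?_
  simp only [id_eq]
  field_simp
  ring


def Phi (a z : ℝ) : ℝ := Gf ((a-1)/2) (z/4) + sfun a (z/4) * Gf (-((a-1)/2)) (z/4)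
def Phi1 (a z : ℝ) : ℝ :=
  (1/4) * (DG ((a-1)/2) (z/4) + ((1-a) * (|z/4|^(-a) * Gf (-((a-1)/2)) (z/4))
    + sfun a (z/4) * DG (-((a-1)/2)) (z/4)))
def Phi2 (a z : ℝ) : ℝ :=
  (1/16) * (DDG ((a-1)/2) (z/4)
    + (-a * |z/4|^(-a) / (z/4)) * ((1-a) * Gf (-((a-1)/2)) (z/4))
    + 2*(1-a) * (|z/4|^(-a) * DG (-((a-1)/2)) (z/4))
    + sfun a (z/4) * DDG (-((a-1)/2)) (z/4))

variable {a z : ℝ}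

lemma hnu1 (ha₁ : -1 < a) : (-1 : ℝ) < (a-1)/2 := by linarith
lemma hnu2 (ha₂ : a < 1) : (-1 : ℝ) < -((a-1)/2) := by linarith

lemma hasDerivAt_quarter (z : ℝ) : HasDerivAt (fun z : ℝ => z/4) (1/4) z := by
  simpa using (hasDerivAt_id z).div_const 4

lemma hasDerivAt_Phi (ha₁ : -1 < a) (ha₂ : a < 1) (hz : z ≠ 0) :
    HasDerivAt (Phi a) (Phi1 a z) z := by
  have hw : z/4 ≠ 0 := by intro h; apply hz; linarith [h]
  have h1 : HasDerivAt (fun z : ℝ => Gf ((a-1)/2) (z/4)) (DG ((a-1)/2) (z/4) * (1/4)) z :=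
    by have := (hasDerivAt_Gf (hnu1 ha₁) (z/4)).comp z (hasDerivAt_quarter z); exact this
  have h2 : HasDerivAt (fun z : ℝ => Gf (-((a-1)/2)) (z/4)) (DG (-((a-1)/2)) (z/4) * (1/4)) z :=
    by have := (hasDerivAt_Gf (hnu2 ha₂) (z/4)).comp z (hasDerivAt_quarter z); exact this
  have h3 : HasDerivAt (fun z : ℝ => sfun a (z/4)) (((1-a) * |z/4|^(-a)) * (1/4)) z :=
    by have := (hasDerivAt_sfun a hw).comp z (hasDerivAt_quarter z); exact this
  have h := h1.add (h3.mul h2)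
  refine h.congr_deriv ?_
  unfold Phi1
  ring

lemma hasDerivAt_Phi1 (ha₁ : -1 < a) (ha₂ : a < 1) (hz : z ≠ 0) :
    HasDerivAt (Phi1 a) (Phi2 a z) z := by
  have hw : z/4 ≠ 0 := by intro h; apply hz; linarith [h]
  have hDGn : HasDerivAt (fun z : ℝ => DG ((a-1)/2) (z/4)) (DDG ((a-1)/2) (z/4) * (1/4)) z :=
    by have := (hasDerivAt_DG (hnu1 ha₁) (z/4)).comp z (hasDerivAt_quarter z); exact this
  have hG : HasDerivAt (fun z : ℝ => Gf (-((a-1)/2)) (z/4)) (DG (-((a-1)/2)) (z/4) * (1/4)) z :=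
    by have := (hasDerivAt_Gf (hnu2 ha₂) (z/4)).comp z (hasDerivAt_quarter z); exact this
  have hDG2 : HasDerivAt (fun z : ℝ => DG (-((a-1)/2)) (z/4)) (DDG (-((a-1)/2)) (z/4) * (1/4)) z :=
    by have := (hasDerivAt_DG (hnu2 ha₂) (z/4)).comp z (hasDerivAt_quarter z); exact this
  have hA : HasDerivAt (fun z : ℝ => |z/4|^(-a)) ((-a * |z/4|^(-a) / (z/4)) * (1/4)) z :=
    by have := (hasDerivAt_abs_rpow a hw).comp z (hasDerivAt_quarter z); exact this
  have hS : HasDerivAt (fun z : ℝ => sfun a (z/4)) (((1-a) * |z/4|^(-a)) * (1/4)) z :=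
    by have := (hasDerivAt_sfun a hw).comp z (hasDerivAt_quarter z); exact this
  have h := ((hDGn.add (((hA.mul hG).const_mul (1-a)).add (hS.mul hDG2)))).const_mul (1/4)
  refine h.congr_deriv ?_
  unfold Phi2 sfun
  ring

lemma Phi_ode (ha₁ : -1 < a) (ha₂ : a < 1) (hz : z ≠ 0) :
    z * Phi2 a z + a * Phi1 a z - z/4 * Phi a z = 0 := by
  have hw : z/4 ≠ 0 := by intro h; apply hz; linarith [h]
  have h1 := ode (hnu1 ha₁) (z/4)
  have h2 := ode (hnu2 ha₂) (z/4)
  unfold Phi Phi1 Phi2 sfun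
  have hA2 : -a * |z/4|^(-a) / (z/4) = -a * (|z/4|^(-a) / (z/4)) := by ring
  rw [hA2]
  set B := |z/4|^(-a) / (z/4) with hB
  have hA : |z/4|^(-a) = B * (z/4) := by rw [hB]; field_simp
  rw [hA]
  linear_combination (1/4) * h1 + ((z/4)*(z/4)*B/4) * h2

lemma Fker_eq (a : ℝ) : Fker a = fun z => Real.exp (-z/2) * Phi a z := by
  funext z
  unfold Fker Phi Gf sfun dcoef
  congr 1
  congr 1
  · exact tsum_congr fun k => by rw [div_eq_mul_inv, one_div, mul_comm]
  · congr 1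
    exact tsum_congr fun k => by
      rw [show (k:ℝ) - (a-1)/2 + 1 = (k:ℝ) + -((a-1)/2) + 1 from by ring,
        div_eq_mul_inv, one_div, mul_comm]

def Fd1 (a z : ℝ) : ℝ := Real.exp (-z/2) * (-(1/2)) * Phi a z + Real.exp (-z/2) * Phi1 a z
def Fd2 (a z : ℝ) : ℝ := Real.exp (-z/2) * (-(1/2)) * (-(1/2)) * Phi a z
  + Real.exp (-z/2) * (-(1/2)) * Phi1 a z + (Real.exp (-z/2) * (-(1/2)) * Phi1 a z
  + Real.exp (-z/2) * Phi2 a z)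

lemma hasDerivAt_exphalf (z : ℝ) :
    HasDerivAt (fun z : ℝ => Real.exp (-z/2)) (Real.exp (-z/2) * (-(1/2))) z := by
  have h : HasDerivAt (fun z : ℝ => -z/2) (-(1/2)) z := by
    have := (hasDerivAt_id z).neg.div_const 2
    refine this.congr_deriv ?_
    norm_num
  exact h.exp

lemma hasDerivAt_Fker {a z : ℝ} (ha₁ : -1 < a) (ha₂ : a < 1) (hz : z ≠ 0) :
    HasDerivAt (Fker a) (Fd1 a z) z := by
  rw [Fker_eq]
  exact (hasDerivAt_exphalf z).mul (hasDerivAt_Phi ha₁ ha₂ hz)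

lemma hasDerivAt_Fd1 {a z : ℝ} (ha₁ : -1 < a) (ha₂ : a < 1) (hz : z ≠ 0) :
    HasDerivAt (Fd1 a) (Fd2 a z) z := by
  have h1 : HasDerivAt (fun z : ℝ => Real.exp (-z/2) * (-(1/2))) (Real.exp (-z/2) * (-(1/2)) * (-(1/2))) z := by
    exact (hasDerivAt_exphalf z).mul_const (-(1/2))
  have h := (h1.mul (hasDerivAt_Phi ha₁ ha₂ hz)).add
    ((hasDerivAt_exphalf z).mul (hasDerivAt_Phi1 ha₁ ha₂ hz))
  refine h.congr_deriv ?_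
  rfl

lemma Fker_ode {a z : ℝ} (ha₁ : -1 < a) (ha₂ : a < 1) (hz : z ≠ 0) :
    z * Fd2 a z + (z + a) * Fd1 a z + a/2 * Fker a z = 0 := by
  rw [Fker_eq]
  unfold Fd2 Fd1
  linear_combination Real.exp (-z/2) * Phi_ode ha₁ ha₂ hz

def U1 (a x t w : ℝ) : ℝ :=
  (4*t)^(-(a+1)/2) * Real.exp (-(x-w)^2/(4*t)) *
    ((x-w)/(2*t) * Fker a (x*w/t) + Fd1 a (x*w/t) * (x/t))

def U2 (a x t w : ℝ) : ℝ :=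
  (4*t)^(-(a+1)/2) * Real.exp (-(x-w)^2/(4*t)) *
    ((x-w)/(2*t) * ((x-w)/(2*t) * Fker a (x*w/t) + Fd1 a (x*w/t) * (x/t))
      + (-(1/(2*t)) * Fker a (x*w/t) + (x-w)/(2*t) * (Fd1 a (x*w/t) * (x/t))
        + Fd2 a (x*w/t) * (x/t) * (x/t)))

def Ut (a x y t : ℝ) : ℝ :=
  (-(a+1)/2) * 4 * ((4*t)^(-(a+1)/2-1)) * Real.exp (-(x-y)^2/(4*t)) * Fker a (x*y/t)
  + (4*t)^(-(a+1)/2) * Real.exp (-(x-y)^2/(4*t)) * ((x-y)^2/(4*t^2)) * Fker a (x*y/t)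
  + (4*t)^(-(a+1)/2) * Real.exp (-(x-y)^2/(4*t)) * Fd1 a (x*y/t) * (-(x*y)/t^2)

lemma hasDerivAt_Fcomp (ha₁ : -1 < a) (ha₂ : a < 1) (ht : 0 < t)
    (h : x = 0 ∨ x*w/t ≠ 0) :
    HasDerivAt (fun w' : ℝ => Fker a (x*w'/t)) (Fd1 a (x*w/t) * (x*1/t)) w := by
  rcases h with hx | hz
  · subst hx
    simp only [zero_mul, zero_div]
    simpa using hasDerivAt_const w (Fker a 0)
  · exact (hasDerivAt_Fker ha₁ ha₂ hz).comp w (((hasDerivAt_id w).const_mul x).div_const t)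

lemma hasDerivAt_Fd1comp (ha₁ : -1 < a) (ha₂ : a < 1) (ht : 0 < t)
    (h : x = 0 ∨ x*w/t ≠ 0) :
    HasDerivAt (fun w' : ℝ => Fd1 a (x*w'/t)) (Fd2 a (x*w/t) * (x*1/t)) w := by
  rcases h with hx | hz
  · subst hx
    simp only [zero_mul, zero_div]
    simpa using hasDerivAt_const w (Fd1 a 0)
  · exact (hasDerivAt_Fd1 ha₁ ha₂ hz).comp w (((hasDerivAt_id w).const_mul x).div_const t)

lemma hasDerivAt_E (ht : 0 < t) (x : ℝ) (w : ℝ) :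
    HasDerivAt (fun w' : ℝ => Real.exp (-(x-w')^2/(4*t)))
      (Real.exp (-(x-w)^2/(4*t)) * (-(2*(x-w)^1*(-1))/(4*t))) w := by
  exact ((((hasDerivAt_id w).const_sub x).pow 2).neg.div_const (4*t)).exp

lemma hasDerivAt_utilde_y (ha₁ : -1 < a) (ha₂ : a < 1) (ht : 0 < t)
    (h : x = 0 ∨ x*w/t ≠ 0) :
    HasDerivAt (fun w' : ℝ => utilde a x w' t) (U1 a x t w) w := by
  have hC := (hasDerivAt_E ht x w).const_mul ((4*t)^(-(a+1)/2))
  have h2 := hC.mul (hasDerivAt_Fcomp ha₁ ha₂ ht h)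
  refine h2.congr_deriv ?_
  unfold U1
  field_simp
  ring

lemma hasDerivAt_U1 (ha₁ : -1 < a) (ha₂ : a < 1) (ht : 0 < t)
    (h : x = 0 ∨ x*w/t ≠ 0) :
    HasDerivAt (fun w' : ℝ => U1 a x t w') (U2 a x t w) w := by
  have hC := (hasDerivAt_E ht x w).const_mul ((4*t)^(-(a+1)/2))
  have hlin : HasDerivAt (fun w' : ℝ => (x-w')/(2*t)) (-1/(2*t)) w :=
    ((hasDerivAt_id w).const_sub x).div_const (2*t)
  have hH := (hlin.mul (hasDerivAt_Fcomp ha₁ ha₂ ht h)).add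
    ((hasDerivAt_Fd1comp ha₁ ha₂ ht h).mul_const (x/t))
  have h2 := hC.mul hH
  refine h2.congr_deriv ?_
  simp only [Pi.mul_apply, Pi.add_apply]
  unfold U2
  field_simp
  ring

lemma hasDerivAt_utilde_t (ha₁ : -1 < a) (ha₂ : a < 1) (ht : 0 < t) (y : ℝ)
    (h : x*y = 0 ∨ x*y/t ≠ 0) :
    HasDerivAt (fun s : ℝ => utilde a x y s) (Ut a x y t) t := by
  have h4t : (0:ℝ) < 4*t := by linarith
  have hP : HasDerivAt (fun s : ℝ => (4*s)^(-(a+1)/2))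
      ((4*(1:ℝ)) * (-(a+1)/2) * (4*t)^(-(a+1)/2-1)) t :=
    HasDerivAt.rpow_const ((hasDerivAt_id t).const_mul 4) (Or.inl h4t.ne')
  have hEt : HasDerivAt (fun s : ℝ => Real.exp (-(x-y)^2/(4*s)))
      (Real.exp (-(x-y)^2/(4*t)) * ((0 * (4*t) - (-(x-y)^2) * (4*1))/(4*t)^2)) t :=
    (((hasDerivAt_const t (-(x-y)^2)).div ((hasDerivAt_id t).const_mul 4) h4t.ne')).exp
  have hFt : HasDerivAt (fun s : ℝ => Fker a (x*y/s)) (Fd1 a (x*y/t) * ((x*y) * (-(t^2)⁻¹))) t := by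
    rcases h with hxy | hz
    · rw [show (fun s : ℝ => Fker a (x*y/s)) = fun _ => Fker a 0 by
        funext s; rw [hxy, zero_div]]
      simpa [hxy] using hasDerivAt_const t (Fker a 0)
    · have hinner : HasDerivAt (fun s : ℝ => x*y/s) ((x*y) * (-(t^2)⁻¹)) t := by
        simpa [div_eq_mul_inv] using (hasDerivAt_inv ht.ne').const_mul (x*y)
      exact (hasDerivAt_Fker ha₁ ha₂ hz).comp t hinner
  have h2 := (hP.mul hEt).mul hFt
  refine h2.congr_deriv ?_
  simp only [Pi.mul_apply]
  unfold Ut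
  field_simp
  ring

end UP
open UP

/-- For every `x`, every `y ≠ 0` and `t > 0`, the kernel `ũ` satisfies
`∂_t ũ - ∂_{yy} ũ - (a/y) ∂_y ũ = 0`. -/
theorem utilde_solves (a : ℝ) (ha₁ : -1 < a) (ha₂ : a < 1) (x y t : ℝ) (hy : y ≠ 0)
    (ht : 0 < t) :
    deriv (fun s => utilde a x y s) t
      - deriv (deriv (fun w => utilde a x w t)) y
      - a / y * deriv (fun w => utilde a x w t) y = 0 := by
  have hcase : x = 0 ∨ x*y/t ≠ 0 := by
    rcases eq_or_ne x 0 with hx | hx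
    · exact Or.inl hx
    · exact Or.inr (div_ne_zero (mul_ne_zero hx hy) ht.ne')
  have hxy : x*y = 0 ∨ x*y/t ≠ 0 := by
    rcases hcase with hx | hz
    · exact Or.inl (by rw [hx, zero_mul])
    · exact Or.inr hz
  have hdt : deriv (fun s => utilde a x y s) t = Ut a x y t :=
    (hasDerivAt_utilde_t ha₁ ha₂ ht y hxy).deriv
  have hd1 : deriv (fun w => utilde a x w t) y = U1 a x t y :=
    (hasDerivAt_utilde_y ha₁ ha₂ ht hcase).deriv
  have hev : deriv (fun w => utilde a x w t) =ᶠ[nhds y] U1 a x t := by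
    rcases eq_or_ne x 0 with hx | hx
    · exact Filter.Eventually.of_forall fun w =>
        (hasDerivAt_utilde_y ha₁ ha₂ ht (Or.inl hx)).deriv
    · filter_upwards [isOpen_compl_singleton.mem_nhds (by simpa using hy :
        y ∈ ({0}ᶜ : Set ℝ))] with w hw
      exact (hasDerivAt_utilde_y ha₁ ha₂ ht
        (Or.inr (div_ne_zero (mul_ne_zero hx (by simpa using hw)) ht.ne'))).deriv
  have hd2 : deriv (deriv (fun w => utilde a x w t)) y = U2 a x t y := by
    rw [hev.deriv_eq]
    exact (hasDerivAt_U1 ha₁ ha₂ ht hcase).deriv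
  rw [hdt, hd1, hd2]
  have h4t : (0:ℝ) < 4*t := by linarith
  have hrpow : (4*t)^(-(a+1)/2) = (4*t)^(-(a+1)/2-1) * (4*t) := by
    rw [← Real.rpow_add_one h4t.ne' (-(a+1)/2-1)]
    congr 1
    ring
  unfold Ut U1 U2
  rw [hrpow]
  rcases hcase with hx | hz
  · subst hx
    field_simp
    ring
  · have hode := Fker_ode ha₁ ha₂ hz
    have hode2 : x*y*Fd2 a (x*y/t) + (x*y + a*t)*Fd1 a (x*y/t) + a*t/2*Fker a (x*y/t) = 0 := by
      field_simp at hode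
      linarith [hode]
    field_simp
    linear_combination (-(16:ℝ) * x * ((4*t)^((-(a+1)-2)/2)) * Real.exp (-((x-y)^2/(4*t)))) * hode2

end
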